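/- Let a, b, φ, θ be real numbers with ab ≠ 0 and sin((φ−θ)/2) ≠ 0; set Δ = φ − θ, m_k = a·e^{ikφ} + b·e^{ikθ}, and M_k = |m_k|. Then M_0² − M_1² ≠ 0 and cos Δ = (2M_1² − M_0² − M_2²)/(2(M_0² − M_1²)). -/

import Mathlib

lemma abs_sq_key (a b x y : ℝ) :
    ‖((a : ℂ) * Complex.exp (Complex.I * x) +
      (b : ℂ) * Complex.exp (Complex.I * y))‖ ^ 2
      = a ^ 2 + b ^ 2 + 2 * a * b * Real.cos (x - y) := by
  rw [← Complex.normSq_eq_norm_sq]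
  have hx : Complex.I * (x : ℂ) = (x : ℂ) * Complex.I := mul_comm _ _
  have hy : Complex.I * (y : ℂ) = (y : ℂ) * Complex.I := mul_comm _ _
  rw [hx, hy, Complex.exp_mul_I, Complex.exp_mul_I]
  simp [Complex.normSq_apply, Complex.add_re, Complex.add_im, Complex.cos_ofReal_re,
    Complex.sin_ofReal_re, Real.cos_sub]
  ring_nf
  nlinarith [Real.sin_sq_add_cos_sq x, Real.sin_sq_add_cos_sq y]

/-- Recovery of the phase difference: with `m_k = a·e^{ikφ} + b·e^{ikθ}`,
`M_k = |m_k|`, `Δ = φ − θ`, `ab ≠ 0` and `sin(Δ/2) ≠ 0`, one has `M₀² − M₁² ≠ 0` and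
`cos Δ = (2M₁² − M₀² − M₂²)/(2(M₀² − M₁²))`. -/
theorem phase_difference_recovery
    (a b φ θ : ℝ) (hab : a * b ≠ 0) (hs : Real.sin ((φ - θ) / 2) ≠ 0)
    (M : ℕ → ℝ)
    (hM : ∀ k : ℕ, M k = ‖((a : ℂ) * Complex.exp (Complex.I * k * φ) +
        (b : ℂ) * Complex.exp (Complex.I * k * θ))‖) :
    M 0 ^ 2 - M 1 ^ 2 ≠ 0 ∧
    Real.cos (φ - θ) =
      (2 * M 1 ^ 2 - M 0 ^ 2 - M 2 ^ 2) / (2 * (M 0 ^ 2 - M 1 ^ 2)) := by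
  have hMk : ∀ k : ℕ, M k ^ 2 = a ^ 2 + b ^ 2 + 2 * a * b * Real.cos (k * (φ - θ)) := by
    intro k
    rw [hM k]
    have := abs_sq_key a b (k * φ) (k * θ)
    rw [show (k : ℝ) * φ - k * θ = k * (φ - θ) by ring] at this
    rw [← this]
    norm_cast
    push_cast
    ring_nf
  have h0 := hMk 0
  have h1 := hMk 1
  have h2 := hMk 2
  simp at h0 h1 h2
  have hcos2 : Real.cos (2 * (φ - θ)) = 2 * Real.cos (φ - θ) ^ 2 - 1 := by
    rw [Real.cos_two_mul]
  have hc1 : Real.cos (φ - θ) ≠ 1 := by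
    intro h
    have h2' : Real.cos (2 * ((φ - θ) / 2)) = 1 := by
      rw [show 2 * ((φ - θ) / 2) = φ - θ by ring, h]
    rw [Real.cos_two_mul'] at h2'
    have := Real.sin_sq_add_cos_sq ((φ - θ) / 2)
    exact hs (by nlinarith)
  have hdiff : M 0 ^ 2 - M 1 ^ 2 = 2 * a * b * (1 - Real.cos (φ - θ)) := by
    rw [h0, h1]; ring
  have hne : M 0 ^ 2 - M 1 ^ 2 ≠ 0 := by
    rw [hdiff]
    have h1c : 1 - Real.cos (φ - θ) ≠ 0 := fun h => hc1 (by linarith)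
    intro h
    rcases mul_eq_zero.1 h with h' | h'
    · exact hab (by nlinarith)
    · exact h1c h'
  refine ⟨hne, ?_⟩
  rw [eq_div_iff (mul_ne_zero two_ne_zero hne)]
  rw [h0, h1, h2, hcos2]
  ring
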